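/- Let n ≥ 5 be an integer. There exist a constant C > 0 and ℓ₀ ≥ 1 such that for every real ℓ ≥ ℓ₀, | V(ℓ) − √(π/(nℓ)) | ≤ C·ℓ^{−3/2}. In particular, ℓ^{1/2} · V(ℓ) → √(π/n) as ℓ → ∞. -/

import Mathlib

open Real Filter

open MeasureTheory Set intervalIntegral

lemma ptwise (a s : ℝ) (h : 0 ≤ a * s ^ 2) :
    a * s ^ 2 * Real.exp (-(a * s ^ 2)) ≤ 2 * Real.exp (-(a * s ^ 2) / 2) := by
  set x := a * s ^ 2 / 2 with hx
  have hx0 : 0 ≤ x := by positivity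
  have h1 : x ≤ Real.exp x := (le_add_of_nonneg_right zero_le_one).trans (Real.add_one_le_exp x)
  have h2 : x * Real.exp (-x) ≤ 1 := by
    have hp := Real.exp_pos x
    rw [Real.exp_neg, mul_inv_le_iff₀ hp, one_mul]; exact h1
  have h3 : -(a * s ^ 2) = -x + -x := by rw [hx]; ring
  have h5 : a * s ^ 2 = 2 * x := by rw [hx]; ring
  rw [h3, h5]
  have h4 : (-x + -x) / 2 = -x := by ring
  rw [h4, Real.exp_add]
  nlinarith [Real.exp_pos (-x)]

lemma rpow_nth (ℓ : ℝ) (h : 0 < ℓ) : ℓ ^ (-(3:ℝ)/2) = (ℓ * Real.sqrt ℓ)⁻¹ := by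
  rw [show (-(3:ℝ)/2) = -((3:ℝ)/2) by norm_num, Real.rpow_neg h.le]
  congr 1
  rw [show ((3:ℝ)/2) = 1 + 1/2 by norm_num, Real.rpow_add h, Real.rpow_one,
    Real.sqrt_eq_rpow]

/-- Volume integral `V(ℓ)` of `g_ℓ = e^{−2ℓs²} g_{S^n}` (up to the factor `ω_{n−1}`). -/
noncomputable def V (n : ℕ) (ℓ : ℝ) : ℝ :=
  ∫ s in (-1 : ℝ)..1,
    Real.exp (-(n : ℝ) * ℓ * s ^ 2) * (1 - s ^ 2) ^ (((n : ℝ) - 2) / 2)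

set_option maxHeartbeats 2000000 in
lemma key (n : ℕ) (hn : 5 ≤ n) (ℓ : ℝ) (hℓ : 1 ≤ ℓ) :
    |V n ℓ - Real.sqrt (π / ((n : ℝ) * ℓ))| ≤
      (Real.sqrt (2 * π) + Real.sqrt π * Real.exp 1) * ℓ ^ (-(3 : ℝ) / 2) := by
  have hℓ0 : (0 : ℝ) < ℓ := lt_of_lt_of_le one_pos hℓ
  set a : ℝ := (n : ℝ) * ℓ with ha_def
  have hn5 : (5 : ℝ) ≤ (n : ℝ) := by exact_mod_cast hn
  have ha5 : 5 * ℓ ≤ a := by rw [ha_def]; nlinarith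
  have ha1 : (1 : ℝ) ≤ a := by nlinarith
  have ha0 : (0 : ℝ) < a := lt_of_lt_of_le one_pos ha1
  set m : ℝ := ((n : ℝ) - 2) / 2 with hm_def
  have hm1 : (1 : ℝ) ≤ m := by rw [hm_def]; linarith
  have hm0 : (0 : ℝ) < m := lt_of_lt_of_le one_pos hm1
  have h2m : 2 * m ≤ (n : ℝ) := by rw [hm_def]; linarith
  -- the three functions
  set f : ℝ → ℝ := fun s => Real.exp (-(a * s ^ 2)) * (1 - s ^ 2) ^ m with hf_def
  set g : ℝ → ℝ := fun s => Real.exp (-(a * s ^ 2)) with hg_def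
  have hVf : V n ℓ = ∫ s in (-1 : ℝ)..1, f s := by
    unfold V
    congr 1 with s
    rw [hf_def, ha_def, hm_def]
    ring_nf
  -- integrability
  have hg_int : Integrable g := by
    have := integrable_exp_neg_mul_sq ha0
    simpa [hg_def, neg_mul] using this
  have hg_half_int : Integrable (fun s : ℝ => Real.exp (-(a / 2) * s ^ 2)) :=
    integrable_exp_neg_mul_sq (by positivity)
  have hf_cont : Continuous f := by
    apply (Real.continuous_exp.comp (by continuity)).mul
    apply Continuous.rpow_const (by continuity)
    intro s; right; positivity
  have hf_ii : IntervalIntegrable f volume (-1) 1 := hf_cont.intervalIntegrable _ _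
  have hg_ii : IntervalIntegrable g volume (-1) 1 := hg_int.intervalIntegrable
  -- Step A : |∫f - ∫g| over [-1,1]
  have stepA : |(∫ s in (-1:ℝ)..1, f s) - ∫ s in (-1:ℝ)..1, g s|
      ≤ Real.sqrt (2 * π) * ℓ ^ (-(3:ℝ)/2) := by
    have hb_ii : IntervalIntegrable (fun s : ℝ => 2 * m / a * Real.exp (-(a/2) * s ^ 2))
        volume (-1) 1 := (hg_half_int.const_mul _).intervalIntegrable
    -- pointwise facts
    have hfg : ∀ s ∈ Icc (-1:ℝ) 1, f s ≤ g s := by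
      intro s hs
      rw [hf_def, hg_def]
      simp only
      have h1 : (1 - s ^ 2 : ℝ) ^ m ≤ 1 := by
        apply Real.rpow_le_one (by nlinarith [hs.1, hs.2]) (by nlinarith [hs.1, hs.2]) hm0.le
      nlinarith [Real.exp_pos (-(a * s ^ 2))]
    have hbound : ∀ s ∈ Icc (-1:ℝ) 1,
        g s - f s ≤ 2 * m / a * Real.exp (-(a/2) * s ^ 2) := by
      intro s hs
      have hs2 : s ^ 2 ≤ 1 := by nlinarith [hs.1, hs.2]
      have hbern : 1 - m * s ^ 2 ≤ (1 - s ^ 2 : ℝ) ^ m := by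
        have := one_add_mul_self_le_rpow_one_add (s := -(s^2)) (by linarith) hm1
        calc 1 - m * s ^ 2 = 1 + m * (-(s^2)) := by ring
          _ ≤ (1 + -(s^2)) ^ m := this
          _ = (1 - s ^ 2) ^ m := by congr 1
      have hE := Real.exp_pos (-(a * s ^ 2))
      have hP := ptwise a s (by positivity)
      rw [hf_def, hg_def]; simp only
      have key : Real.exp (-(a * s ^ 2)) * (1 - (1 - s ^ 2) ^ m)
          ≤ 2 * m / a * Real.exp (-(a/2) * s ^ 2) := by
        calc Real.exp (-(a * s ^ 2)) * (1 - (1 - s ^ 2) ^ m)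
            ≤ Real.exp (-(a * s ^ 2)) * (m * s ^ 2) := by nlinarith
          _ = (m / a) * (a * s ^ 2 * Real.exp (-(a * s ^ 2))) := by field_simp
          _ ≤ (m / a) * (2 * Real.exp (-(a * s ^ 2) / 2)) := by
              apply mul_le_mul_of_nonneg_left hP (by positivity)
          _ = 2 * m / a * Real.exp (-(a/2) * s ^ 2) := by
              rw [show -(a * s ^ 2) / 2 = -(a/2) * s ^ 2 by ring]; ring
      linarith
    -- integral comparison
    have hIle : (∫ s in (-1:ℝ)..1, f s) ≤ ∫ s in (-1:ℝ)..1, g s :=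
      integral_mono_on (by norm_num) hf_ii hg_ii hfg
    rw [abs_sub_comm, abs_of_nonneg (by linarith)]
    have hsub : (∫ s in (-1:ℝ)..1, g s) - (∫ s in (-1:ℝ)..1, f s)
        = ∫ s in (-1:ℝ)..1, (g s - f s) := (integral_sub hg_ii hf_ii).symm
    rw [hsub]
    have step1 : (∫ s in (-1:ℝ)..1, (g s - f s))
        ≤ ∫ s in (-1:ℝ)..1, 2 * m / a * Real.exp (-(a/2) * s ^ 2) :=
      integral_mono_on (by norm_num) (hg_ii.sub hf_ii) hb_ii hbound
    have step2 : (∫ s in (-1:ℝ)..1, 2 * m / a * Real.exp (-(a/2) * s ^ 2))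
        ≤ 2 * m / a * Real.sqrt (2 * π / a) := by
      rw [intervalIntegral.integral_const_mul]
      apply mul_le_mul_of_nonneg_left _ (by positivity)
      rw [integral_of_le (by norm_num : (-1:ℝ) ≤ 1)]
      calc (∫ s in Ioc (-1:ℝ) 1, Real.exp (-(a/2) * s ^ 2))
          ≤ ∫ s : ℝ, Real.exp (-(a/2) * s ^ 2) :=
            setIntegral_le_integral hg_half_int
              (Filter.Eventually.of_forall fun s => (Real.exp_pos _).le)
        _ = Real.sqrt (π / (a/2)) := integral_gaussian _
        _ = Real.sqrt (2 * π / a) := by rw [show π / (a/2) = 2 * π / a by field_simp]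
    have step3 : 2 * m / a * Real.sqrt (2 * π / a) ≤ Real.sqrt (2 * π) * ℓ ^ (-(3:ℝ)/2) := by
      rw [rpow_nth ℓ hℓ0]
      have hsd : Real.sqrt (2 * π / a) = Real.sqrt (2 * π) / Real.sqrt a :=
        Real.sqrt_div (by positivity) a
      rw [hsd]
      have hsa : Real.sqrt ℓ ≤ Real.sqrt a := Real.sqrt_le_sqrt (by nlinarith)
      have hsl0 : 0 < Real.sqrt ℓ := Real.sqrt_pos.2 hℓ0
      have hsa0 : 0 < Real.sqrt a := Real.sqrt_pos.2 ha0
      have hS : (0:ℝ) ≤ Real.sqrt (2 * π) := Real.sqrt_nonneg _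
      rw [div_mul_div_comm, div_le_iff₀ (by positivity)]
      have hpos : (0:ℝ) ≤ ℓ * Real.sqrt ℓ := by positivity
      have e1 : 2 * m * (ℓ * Real.sqrt ℓ) ≤ (n:ℝ) * (ℓ * Real.sqrt ℓ) :=
        mul_le_mul_of_nonneg_right h2m hpos
      have e2 : (n:ℝ) * (ℓ * Real.sqrt ℓ) = a * Real.sqrt ℓ := by rw [ha_def]; ring
      have e3 : a * Real.sqrt ℓ ≤ a * Real.sqrt a := mul_le_mul_of_nonneg_left hsa ha0.le
      have h1 : 2 * m * (ℓ * Real.sqrt ℓ) ≤ a * Real.sqrt a := by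
        rw [e2] at e1; linarith
      have h2 : 2 * m ≤ (a * Real.sqrt a) / (ℓ * Real.sqrt ℓ) :=
        (le_div_iff₀ (by positivity)).2 (by linarith)
      calc 2 * m * Real.sqrt (2 * π)
          ≤ ((a * Real.sqrt a) / (ℓ * Real.sqrt ℓ)) * Real.sqrt (2 * π) :=
            mul_le_mul_of_nonneg_right h2 hS
        _ = Real.sqrt (2 * π) * (ℓ * Real.sqrt ℓ)⁻¹ * (a * Real.sqrt a) := by
            rw [div_eq_mul_inv]; ring
    linarith
  -- Step B : √(π/a) - ∫g over [-1,1]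
  have stepB : |Real.sqrt (π / a) - ∫ s in (-1:ℝ)..1, g s|
      ≤ Real.sqrt π * Real.exp 1 * ℓ ^ (-(3:ℝ)/2) := by
    have hgauss : (∫ s : ℝ, g s) = Real.sqrt (π / a) := by
      rw [hg_def]
      simpa [neg_mul] using integral_gaussian a
    have hIoc : (∫ s in (-1:ℝ)..1, g s) = ∫ s in Ioc (-1:ℝ) 1, g s :=
      integral_of_le (by norm_num)
    have hsplit := integral_add_compl (measurableSet_Ioc : MeasurableSet (Ioc (-1:ℝ) 1)) hg_int
    -- √(π/a) - I2 = ∫ over complement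
    have hdiff : Real.sqrt (π / a) - (∫ s in (-1:ℝ)..1, g s)
        = ∫ s in (Ioc (-1:ℝ) 1)ᶜ, g s := by
      rw [hIoc, ← hgauss, ← hsplit]; ring
    have hg_nonneg : ∀ s, 0 ≤ g s := by intro s; rw [hg_def]; positivity
    have hnn : 0 ≤ ∫ s in (Ioc (-1:ℝ) 1)ᶜ, g s :=
      setIntegral_nonneg measurableSet_Ioc.compl fun s _ => hg_nonneg s
    rw [hdiff, abs_of_nonneg hnn]
    -- bound on the complement
    have hb_int : Integrable (fun s : ℝ => Real.exp (1 - a) * Real.exp (-(1:ℝ) * s ^ 2)) :=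
      (integrable_exp_neg_mul_sq one_pos).const_mul _
    have hmono : ∫ s in (Ioc (-1:ℝ) 1)ᶜ, g s
        ≤ ∫ s in (Ioc (-1:ℝ) 1)ᶜ, Real.exp (1 - a) * Real.exp (-(1:ℝ) * s ^ 2) := by
      apply setIntegral_mono_on hg_int.integrableOn hb_int.integrableOn
        measurableSet_Ioc.compl
      intro s hs
      have hs2 : 1 ≤ s ^ 2 := by
        rw [mem_compl_iff, mem_Ioc, not_and_or] at hs
        rcases hs with h | h
        · push_neg at h; nlinarith
        · push_neg at h; nlinarith
      rw [hg_def]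
      simp only
      rw [← Real.exp_add]
      apply Real.exp_le_exp.2
      nlinarith
    have hfull : ∫ s in (Ioc (-1:ℝ) 1)ᶜ, Real.exp (1 - a) * Real.exp (-(1:ℝ) * s ^ 2)
        ≤ Real.exp (1 - a) * Real.sqrt π := by
      calc ∫ s in (Ioc (-1:ℝ) 1)ᶜ, Real.exp (1 - a) * Real.exp (-(1:ℝ) * s ^ 2)
          ≤ ∫ s : ℝ, Real.exp (1 - a) * Real.exp (-(1:ℝ) * s ^ 2) :=
            setIntegral_le_integral hb_int
              (Filter.Eventually.of_forall fun s => by positivity)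
        _ = Real.exp (1 - a) * Real.sqrt π := by
            rw [MeasureTheory.integral_const_mul, integral_gaussian]; norm_num
    -- final numeric bound : exp(1-a) ≤ exp 1 * ℓ^{-3/2}
    have hnum : Real.exp (1 - a) ≤ Real.exp 1 * ℓ ^ (-(3:ℝ)/2) := by
      have hsl : Real.sqrt ℓ ≤ ℓ := by
        have h := Real.sqrt_le_sqrt (show ℓ ≤ ℓ ^ 2 by nlinarith)
        rwa [Real.sqrt_sq hℓ0.le] at h
      have hsl0 : 0 < Real.sqrt ℓ := Real.sqrt_pos.2 hℓ0
      have h3 : 2 * ℓ + 1 ≤ Real.exp (2 * ℓ) := Real.add_one_le_exp (2 * ℓ)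
      have h5 : Real.exp (2 * ℓ) * Real.exp (2 * ℓ) = Real.exp (4 * ℓ) := by
        rw [← Real.exp_add]; ring_nf
      have h6 : Real.exp (4 * ℓ) ≤ Real.exp a := Real.exp_le_exp.2 (by linarith)
      have hle : ℓ * Real.sqrt ℓ ≤ Real.exp a := by nlinarith
      rw [rpow_nth ℓ hℓ0, Real.exp_sub, div_eq_mul_inv]
      exact mul_le_mul_of_nonneg_left
        (inv_anti₀ (by positivity) hle) (Real.exp_pos 1).le
    calc ∫ s in (Ioc (-1:ℝ) 1)ᶜ, g s
        ≤ Real.exp (1 - a) * Real.sqrt π := hmono.trans hfull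
      _ ≤ (Real.exp 1 * ℓ ^ (-(3:ℝ)/2)) * Real.sqrt π :=
          mul_le_mul_of_nonneg_right hnum (Real.sqrt_nonneg π)
      _ = Real.sqrt π * Real.exp 1 * ℓ ^ (-(3:ℝ)/2) := by ring
  calc |V n ℓ - Real.sqrt (π / a)|
      ≤ |(∫ s in (-1:ℝ)..1, f s) - ∫ s in (-1:ℝ)..1, g s|
        + |Real.sqrt (π / a) - ∫ s in (-1:ℝ)..1, g s| := by
        rw [hVf]; rw [abs_sub_comm (Real.sqrt (π / a)) _]; exact abs_sub_le _ _ _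
    _ ≤ Real.sqrt (2 * π) * ℓ ^ (-(3:ℝ)/2) + Real.sqrt π * Real.exp 1 * ℓ ^ (-(3:ℝ)/2) :=
        add_le_add stepA stepB
    _ = (Real.sqrt (2 * π) + Real.sqrt π * Real.exp 1) * ℓ ^ (-(3:ℝ)/2) := by ring

set_option maxHeartbeats 1000000 in
/-- For `n ≥ 5`, there are `C > 0` and `ℓ₀ ≥ 1` such that for all `ℓ ≥ ℓ₀`,
`|V(ℓ) − √(π/(nℓ))| ≤ C ℓ^{−3/2}`; in particular `ℓ^{1/2} V(ℓ) → √(π/n)` as `ℓ → ∞`. -/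
theorem stmt12 (n : ℕ) (hn : 5 ≤ n) :
    (∃ C > (0 : ℝ), ∃ ℓ₀ ≥ (1 : ℝ), ∀ ℓ ≥ ℓ₀,
        |V n ℓ - Real.sqrt (π / ((n : ℝ) * ℓ))| ≤ C * ℓ ^ (-(3 : ℝ) / 2)) ∧
      Tendsto (fun ℓ : ℝ => ℓ ^ ((1 : ℝ) / 2) * V n ℓ) atTop
        (nhds (Real.sqrt (π / (n : ℝ)))) := by
  set C : ℝ := Real.sqrt (2 * π) + Real.sqrt π * Real.exp 1 with hC_def
  have hC : 0 < C := by rw [hC_def]; positivity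
  constructor
  · exact ⟨C, hC, 1, le_refl 1, fun ℓ hℓ => key n hn ℓ hℓ⟩
  · have h0 : Tendsto (fun ℓ : ℝ => ℓ ^ ((1:ℝ)/2) * V n ℓ - Real.sqrt (π/(n:ℝ)))
        atTop (nhds 0) := by
      refine squeeze_zero_norm' (a := fun ℓ : ℝ => C * ℓ⁻¹) ?_ ?_
      · filter_upwards [eventually_ge_atTop (1:ℝ)] with ℓ hℓ
        have hℓ0 : (0:ℝ) < ℓ := lt_of_lt_of_le one_pos hℓ
        have hs0 : (0:ℝ) < Real.sqrt ℓ := Real.sqrt_pos.2 hℓ0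
        have hrw : ℓ ^ ((1:ℝ)/2) * Real.sqrt (π/((n:ℝ)*ℓ)) = Real.sqrt (π/(n:ℝ)) := by
          rw [← Real.sqrt_eq_rpow,
            show π/((n:ℝ)*ℓ) = (π/(n:ℝ))/ℓ by ring,
            Real.sqrt_div (by positivity) ℓ, mul_comm,
            div_mul_cancel₀ _ (ne_of_gt hs0)]
        have hsplit : ℓ ^ ((1:ℝ)/2) * V n ℓ - Real.sqrt (π/(n:ℝ))
            = ℓ ^ ((1:ℝ)/2) * (V n ℓ - Real.sqrt (π/((n:ℝ)*ℓ))) := by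
          rw [mul_sub, hrw]
        have hb := key n hn ℓ hℓ
        have hxpos : (0:ℝ) ≤ ℓ ^ ((1:ℝ)/2) := Real.rpow_nonneg hℓ0.le _
        have hcomb : ℓ ^ ((1:ℝ)/2) * (ℓ ^ (-(3:ℝ)/2)) = ℓ⁻¹ := by
          rw [← Real.rpow_add hℓ0]
          norm_num
          exact Real.rpow_neg_one ℓ
        rw [hsplit, Real.norm_eq_abs, abs_mul, abs_of_nonneg hxpos]
        calc ℓ ^ ((1:ℝ)/2) * |V n ℓ - Real.sqrt (π/((n:ℝ)*ℓ))|
            ≤ ℓ ^ ((1:ℝ)/2) * (C * ℓ ^ (-(3:ℝ)/2)) :=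
              mul_le_mul_of_nonneg_left hb hxpos
          _ = C * (ℓ ^ ((1:ℝ)/2) * ℓ ^ (-(3:ℝ)/2)) := by ring
          _ = C * ℓ⁻¹ := by rw [hcomb]
      · simpa using tendsto_inv_atTop_zero.const_mul C
    have h1 := h0.add_const (Real.sqrt (π/(n:ℝ)))
    simpa using h1
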